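/- arXiv:1502.05172 — 6 statements merged into one kernel-verified Lean document; each statement's English description precedes it below -/
import Mathlib

section
/- Let 𝒳 be a class of left R-modules containing all injective modules. A left R-module M is 𝒳-injective if and only if M is the kernel of an 𝒳-precover f : A → B with A an injective module. -/
open CategoryTheory Limits Opposite

/-- `Ext^n_R(X, M) = 0`, phrased via the `Ext` bifunctor on `ModuleCat R`. -/
def extZero (R : Type) [Ring R] (n : ℕ) (X M : ModuleCat R) : Prop :=
  IsZero (((Ext ℤ (ModuleCat R) n).obj (op X)).obj M)

/-- `M` is `𝒳`-injective if `Ext¹(X, M) = 0` for every `X ∈ 𝒳`. -/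
def IsXInjective (R : Type) [Ring R] (𝒳 : ModuleCat R → Prop) (M : ModuleCat R) : Prop :=
  ∀ X, 𝒳 X → extZero R 1 X M

section Aux

variable {R : Type} [Ring R]

/-- Ext¹ vanishing, reformulated via a projective resolution. -/
lemma extZero_one_iff (X M : ModuleCat R) (P : ProjectiveResolution X) :
    extZero R 1 X M ↔ ∀ φ : P.complex.X 1 ⟶ M, P.complex.d 2 1 ≫ φ = 0 →
      ∃ ψ : P.complex.X 0 ⟶ M, P.complex.d 1 0 ≫ ψ = φ := by
  have e := P.isoExt (R := ℤ) 1 M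
  rw [show extZero R 1 X M ↔ IsZero ((P.complex.linearYonedaObj ℤ M).homology 1) from
    ⟨fun h => h.of_iso e.symm, fun h => h.of_iso e⟩,
    ← HomologicalComplex.exactAt_iff_isZero_homology,
    HomologicalComplex.exactAt_iff' _ 0 1 2 (by simp) (by simp),
    ShortComplex.moduleCat_exact_iff]
  constructor
  · intro h φ hφ
    exact h φ hφ
  · intro h φ hφ
    exact h φ hφ

lemma factor_through_mono {P M A : ModuleCat R} (i : M ⟶ A) (hi : Function.Injective i)
    (u : P ⟶ A) (hu : ∀ p, ∃ m, i m = u p) : ∃ φ : P ⟶ M, ∀ p, i (φ p) = u p := by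
  choose g hg using hu
  refine ⟨ModuleCat.ofHom ⟨⟨g, fun p q => hi ?_⟩, fun r p => hi ?_⟩, fun p => hg p⟩
  · simp only [hg, map_add]
  · simp only [hg, map_smul, RingHom.id_apply]

lemma factor_through_epi {P X A : ModuleCat R} (π : P ⟶ X) (hπ : Function.Surjective π)
    (u : P ⟶ A) (hu : ∀ p, π p = 0 → u p = 0) :
    ∃ h : X ⟶ A, ∀ p, h (π p) = u p := by
  choose s hs using hπ
  have key : ∀ p q : P, π p = π q → u p = u q := by
    intro p q h
    have := hu (p - q) (by rw [map_sub, h, sub_self])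
    rw [map_sub, sub_eq_zero] at this
    exact this
  refine ⟨ModuleCat.ofHom ⟨⟨fun x => u (s x), fun x y => ?_⟩, fun r x => ?_⟩, fun p => key _ _ (hs (π p))⟩
  · rw [← map_add]; exact key _ _ (by simp [hs])
  · rw [← map_smul]; exact key _ _ (by simp [hs])

/-- The key homological lemma: given a short exact sequence `0 → M → A → B → 0`
with `A` injective, `Ext¹(X, M) = 0` iff every map `X ⟶ B` lifts to `A`. -/
lemma ext_one_zero_iff_lifts {M A B : ModuleCat R} (X : ModuleCat R) (i : M ⟶ A) (f : A ⟶ B)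
    (hi : Function.Injective i) (hf : Function.Surjective f)
    (hker : ∀ a, f a = 0 ↔ ∃ m, i m = a) (hA : Injective A) :
    extZero R 1 X M ↔ ∀ g : X ⟶ B, ∃ h : X ⟶ A, h ≫ f = g := by
  obtain ⟨P⟩ := (HasProjectiveResolution.out (Z := X))
  rw [extZero_one_iff X M P]
  have hd21 : ∀ p, P.complex.d 1 0 (P.complex.d 2 1 p) = 0 := by
    intro p
    have := P.complex.d_comp_d 2 1 0
    exact ConcreteCategory.congr_hom this p
  have hd1π : ∀ p, P.π.f 0 (P.complex.d 1 0 p) = 0 := by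
    intro p
    have := P.complex_d_comp_π_f_zero
    exact ConcreteCategory.congr_hom this p
  have hπ₀surj : Function.Surjective (P.π.f 0) :=
    (ModuleCat.epi_iff_surjective _).1 inferInstance
  have hex1 : ∀ p, P.complex.d 1 0 p = 0 → ∃ q, P.complex.d 2 1 q = p := by
    intro p hp
    exact (ShortComplex.moduleCat_exact_iff _).1 (P.exact_succ 0) p hp
  have hex0 : ∀ p, P.π.f 0 p = 0 → ∃ q, P.complex.d 1 0 q = p := by
    intro p hp
    exact (ShortComplex.moduleCat_exact_iff _).1 P.exact₀ p hp
  constructor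
  · -- Ext¹ = 0 → lifting
    intro H g
    have : Epi f := (ModuleCat.epi_iff_surjective f).2 hf
    set u : P.complex.X 0 ⟶ A := Projective.factorThru (P.π.f 0 ≫ g) f with hu_def
    have hu : ∀ p, f (u p) = g (P.π.f 0 p) := by
      intro p
      have := Projective.factorThru_comp (P.π.f 0 ≫ g) f
      exact ConcreteCategory.congr_hom this p
    obtain ⟨φ, hφ⟩ := factor_through_mono i hi (P.complex.d 1 0 ≫ u)
      (fun p => (hker _).1 (by
        show f (u (P.complex.d 1 0 p)) = 0
        rw [hu, hd1π]; exact map_zero _))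
    have hcocycle : P.complex.d 2 1 ≫ φ = 0 := by
      ext p
      apply hi
      show i (φ (P.complex.d 2 1 p)) = i ((0 : P.complex.X 2 ⟶ M) p)
      have := hφ (P.complex.d 2 1 p)
      simp only [this]
      show u (P.complex.d 1 0 (P.complex.d 2 1 p)) = i 0
      rw [hd21, map_zero, map_zero]
    obtain ⟨ψ, hψ⟩ := H φ hcocycle
    have hψ' : ∀ p, ψ (P.complex.d 1 0 p) = φ p := by
      intro p
      exact ConcreteCategory.congr_hom hψ p
    obtain ⟨h, hh⟩ := factor_through_epi (P.π.f 0) hπ₀surj (u - ψ ≫ i) (by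
      intro p hp
      obtain ⟨q, rfl⟩ := hex0 p hp
      show u (P.complex.d 1 0 q) - i (ψ (P.complex.d 1 0 q)) = 0
      rw [hψ', hφ]
      show u (P.complex.d 1 0 q) - u (P.complex.d 1 0 q) = 0
      rw [sub_self])
    refine ⟨h, ?_⟩
    ext x
    obtain ⟨p, rfl⟩ := hπ₀surj x
    show f (h (P.π.f 0 p)) = g (P.π.f 0 p)
    rw [hh]
    show f (u p - i (ψ p)) = g (P.π.f 0 p)
    rw [map_sub, hu, (hker (i (ψ p))).2 ⟨ψ p, rfl⟩, sub_zero]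
  · -- lifting → Ext¹ = 0
    intro H φ hcocycle
    have hcocycle' : ∀ p, φ (P.complex.d 2 1 p) = 0 := fun p => by
      have h0 : φ (P.complex.d 2 1 p) = (0 : P.complex.X 2 ⟶ M) p :=
        ConcreteCategory.congr_hom hcocycle p
      simpa using h0
    have key : ∀ p q : P.complex.X 1, P.complex.d 1 0 p = P.complex.d 1 0 q → φ p = φ q := by
      intro p q h
      obtain ⟨r, hr⟩ := hex1 (p - q) (by rw [map_sub, h, sub_self])
      have : φ (p - q) = 0 := by rw [← hr, hcocycle' r]
      rw [map_sub, sub_eq_zero] at this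
      exact this
    -- build v on the image of d₁ and extend to w : P₀ ⟶ A by injectivity of A
    set Q : ModuleCat R := ModuleCat.of R (LinearMap.range (P.complex.d 1 0).hom)
    set m : Q ⟶ P.complex.X 0 := ModuleCat.ofHom (LinearMap.range (P.complex.d 1 0).hom).subtype with hm
    have : Mono m := (ModuleCat.mono_iff_injective m).2 (Submodule.injective_subtype _)
    have hsec : ∀ y : Q, ∃ p, P.complex.d 1 0 p = y.1 := fun y => y.2
    choose s hs using hsec
    set v : Q ⟶ A := ModuleCat.ofHom ⟨⟨fun y => i (φ (s y)), fun y z => by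
        show i (φ (s (y + z))) = i (φ (s y)) + i (φ (s z))
        rw [← map_add, ← map_add]
        exact congrArg i (key _ _ (by rw [hs, map_add, hs, hs]; rfl))⟩, fun r y => by
        show i (φ (s (r • y))) = r • i (φ (s y))
        rw [← map_smul, ← map_smul]
        exact congrArg i (key _ _ (by rw [hs, map_smul, hs]; rfl))⟩ with hv
    set w : P.complex.X 0 ⟶ A := Injective.factorThru v m with hw
    have hwv : ∀ y : Q, w y.1 = i (φ (s y)) := by
      intro y
      have h0 : w (m y) = v y := ConcreteCategory.congr_hom (Injective.comp_factorThru v m) y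
      exact h0
    have hwd : ∀ p, w (P.complex.d 1 0 p) = i (φ p) := by
      intro p
      have h1 := hwv ⟨P.complex.d 1 0 p, ⟨p, rfl⟩⟩
      rw [h1]
      exact congrArg i (key _ _ (hs ⟨P.complex.d 1 0 p, ⟨p, rfl⟩⟩))
    obtain ⟨g, hg⟩ := factor_through_epi (P.π.f 0) hπ₀surj (w ≫ f) (by
      intro p hp
      obtain ⟨q, rfl⟩ := hex0 p hp
      show f (w (P.complex.d 1 0 q)) = 0
      rw [hwd]
      exact (hker _).2 ⟨φ q, rfl⟩)
    obtain ⟨h, hh⟩ := H g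
    have hh' : ∀ a, f (h a) = g a := fun a => ConcreteCategory.congr_hom hh a
    obtain ⟨ψ, hψ⟩ := factor_through_mono i hi (w - P.π.f 0 ≫ h) (by
      intro p
      refine (hker _).1 ?_
      show f (w p - h (P.π.f 0 p)) = 0
      rw [map_sub]; erw [hh', hg]
      show f (w p) - f (w p) = 0
      rw [sub_self])
    refine ⟨ψ, ?_⟩
    ext p
    apply hi
    show i (ψ (P.complex.d 1 0 p)) = i (φ p)
    rw [hψ]
    show w (P.complex.d 1 0 p) - h (P.π.f 0 (P.complex.d 1 0 p)) = i (φ p)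
    rw [hd1π]; erw [map_zero, sub_zero, hwd]

lemma extZero_of_iso {X M M' : ModuleCat R} (e : M ≅ M') (h : extZero R 1 X M') :
    extZero R 1 X M :=
  h.of_iso (((Ext ℤ (ModuleCat R) 1).obj (op X)).mapIso e)

end Aux

/-- Let `𝒳` contain all injective modules. Then `M` is `𝒳`-injective iff `M` is the kernel
of an `𝒳`-precover `f : A → B` with `A` injective. -/
theorem stmt1 (R : Type) [Ring R] (𝒳 : ModuleCat R → Prop)
    (h𝒳 : ∀ E : ModuleCat R, Injective E → 𝒳 E) (M : ModuleCat R) :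
    IsXInjective R 𝒳 M ↔
      ∃ (A B : ModuleCat R) (f : A ⟶ B), Injective A ∧ 𝒳 A ∧
        (∀ C' : ModuleCat R, 𝒳 C' → ∀ g : C' ⟶ B, ∃ h : C' ⟶ A, h ≫ f = g) ∧
        Nonempty (M ≅ kernel f) := by
  constructor
  · intro hM
    set A : ModuleCat R := Injective.under M
    set i : M ⟶ A := Injective.ι M
    have hi : Function.Injective i := (ModuleCat.mono_iff_injective i).1 inferInstance
    set N : Submodule R A := LinearMap.range i.hom
    set B : ModuleCat R := ModuleCat.of R (A ⧸ N)
    set f : A ⟶ B := ModuleCat.ofHom N.mkQ with hf_def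
    have hker : ∀ a, f a = 0 ↔ ∃ m, i m = a := by
      intro a
      rw [show f a = Submodule.Quotient.mk a from rfl, Submodule.Quotient.mk_eq_zero]
      exact ⟨fun ⟨m, hm⟩ => ⟨m, hm⟩, fun ⟨m, hm⟩ => ⟨m, hm⟩⟩
    have hf : Function.Surjective f := N.mkQ_surjective
    refine ⟨A, B, f, inferInstance, h𝒳 A inferInstance, ?_, ?_⟩
    · intro C' hC' g
      exact (ext_one_zero_iff_lifts C' i f hi hf hker inferInstance).1 (hM C' hC') g
    · refine ⟨?_⟩
      have h1 : LinearMap.ker f.hom = N := Submodule.ker_mkQ N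
      exact (Iso.refl M : M ≅ ModuleCat.of R M) ≪≫
        (LinearEquiv.ofInjective i.hom hi).toModuleIso ≪≫
        (LinearEquiv.ofEq _ _ h1.symm).toModuleIso ≪≫ (ModuleCat.kernelIsoKer f).symm
  · rintro ⟨A, B, f, hA, hXA, hpre, ⟨e⟩⟩
    intro X hX
    refine extZero_of_iso e ?_
    set K : ModuleCat R := kernel f
    set ι : K ⟶ A := kernel.ι f
    have hι : Function.Injective ι := (ModuleCat.mono_iff_injective ι).1 inferInstance
    set N : Submodule R A := LinearMap.range ι.hom
    set q : A ⟶ ModuleCat.of R (A ⧸ N) := ModuleCat.ofHom N.mkQ with hq_def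
    have hker : ∀ a, q a = 0 ↔ ∃ k, ι k = a := by
      intro a
      rw [show q a = Submodule.Quotient.mk a from rfl, Submodule.Quotient.mk_eq_zero]
      exact ⟨fun ⟨k, hk⟩ => ⟨k, hk⟩, fun ⟨k, hk⟩ => ⟨k, hk⟩⟩
    have hq : Function.Surjective q := N.mkQ_surjective
    have hιf : ∀ k, f (ι k) = 0 := by
      intro k
      have := kernel.condition f
      exact ConcreteCategory.congr_hom this k
    have hkerf : ∀ a, f a = 0 → ∃ k, ι k = a := by
      intro a ha
      have h2 := ModuleCat.kernelIsoKer_hom_ker_subtype f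
      refine ⟨(ModuleCat.kernelIsoKer f).inv ⟨a, ha⟩, ?_⟩
      have h3 := ConcreteCategory.congr_hom h2
        ((ModuleCat.kernelIsoKer f).inv ⟨a, ha⟩)
      have h4 : (ModuleCat.kernelIsoKer f).hom ((ModuleCat.kernelIsoKer f).inv ⟨a, ha⟩)
          = ⟨a, ha⟩ := by
        have := (ModuleCat.kernelIsoKer f).inv_hom_id
        exact ConcreteCategory.congr_hom this ⟨a, ha⟩
      rw [← h3]
      show (LinearMap.ker f.hom).subtype
        ((ModuleCat.kernelIsoKer f).hom ((ModuleCat.kernelIsoKer f).inv ⟨a, ha⟩)) = a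
      rw [h4]
      rfl
    have hNle : N ≤ LinearMap.ker f.hom := by
      rintro a ⟨k, rfl⟩
      exact hιf k
    set mB : ModuleCat.of R (A ⧸ N) ⟶ B := ModuleCat.ofHom <| N.liftQ f.hom hNle with hmB
    have hmBq : ∀ a, mB (q a) = f a := fun a => Submodule.liftQ_apply N _ a
    have hmBinj : Function.Injective mB := by
      intro x y hxy
      obtain ⟨a, rfl⟩ := hq x
      obtain ⟨b, rfl⟩ := hq y
      rw [hmBq, hmBq] at hxy
      obtain ⟨k, hk⟩ := hkerf (a - b) (by rw [map_sub, hxy, sub_self])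
      show Submodule.Quotient.mk a = Submodule.Quotient.mk b
      rw [Submodule.Quotient.eq]
      exact ⟨k, hk⟩
    refine (ext_one_zero_iff_lifts X ι q hι hq hker hA).2 ?_
    intro g
    obtain ⟨h, hh⟩ := hpre X hX (g ≫ mB)
    have hh' : ∀ x, f (h x) = mB (g x) := by
      intro x
      exact ConcreteCategory.congr_hom hh x
    refine ⟨h, ?_⟩
    ext x
    apply hmBinj
    show mB (q (h x)) = mB (g x)
    rw [hmBq, hh']
end

section
/- Let R be a commutative Noetherian ring and let 𝒳 = { R/𝔭 : 𝔭 ∈ Spec R }. Define 𝒰 = { G : Ext^2_R(R/𝔭, G) = 0 for all 𝔭 ∈ Spec R }. Then every ideal I of R satisfies Ext^1_R(I, G) = 0 for all G ∈ 𝒰 (i.e., R is 𝒰-hereditary). -/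
open CategoryTheory Limits Opposite

namespace Stmt5Aux

open Function

variable {R : Type} [CommRing R]

/-- The extension property: every linear map from `N` to `M` extends to `F`. -/
def Ep (R : Type) [CommRing R] {F : Type} [AddCommGroup F] [Module R F] (N : Submodule R F)
    (M : Type) [AddCommGroup M] [Module R M] : Prop :=
  ∀ f : N →ₗ[R] M, ∃ g : F →ₗ[R] M, ∀ x (hx : x ∈ N), g x = f ⟨x, hx⟩

/-- Factor a linear map through the range of another when kernels are compatible. -/
noncomputable def onRange {A B C : Type} [AddCommGroup A] [Module R A] [AddCommGroup B]
    [Module R B] [AddCommGroup C] [Module R C] (Ψ : A →ₗ[R] B) (Φ : A →ₗ[R] C)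
    (h : LinearMap.ker Ψ ≤ LinearMap.ker Φ) : LinearMap.range Ψ →ₗ[R] C :=
  (LinearMap.ker Ψ).liftQ Φ h ∘ₗ (LinearMap.quotKerEquivRange Ψ).symm.toLinearMap

lemma onRange_apply {A B C : Type} [AddCommGroup A] [Module R A] [AddCommGroup B]
    [Module R B] [AddCommGroup C] [Module R C] (Ψ : A →ₗ[R] B) (Φ : A →ₗ[R] C)
    (h : LinearMap.ker Ψ ≤ LinearMap.ker Φ) (a : A) (hb : Ψ a ∈ LinearMap.range Ψ) :
    onRange Ψ Φ h ⟨Ψ a, hb⟩ = Φ a := by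
  simp [onRange, LinearMap.quotKerEquivRange_symm_apply_image]

/-- Descend a linear map along a surjection with compatible kernel. -/
noncomputable def descend {A B C : Type} [AddCommGroup A] [Module R A] [AddCommGroup B]
    [Module R B] [AddCommGroup C] [Module R C] (Ψ : A →ₗ[R] B) (hΨ : Surjective Ψ)
    (Φ : A →ₗ[R] C) (h : LinearMap.ker Ψ ≤ LinearMap.ker Φ) : B →ₗ[R] C :=
  onRange Ψ Φ h ∘ₗ LinearMap.codRestrict _ LinearMap.id
    (fun x => by rw [LinearMap.range_eq_top.2 hΨ]; trivial)

lemma descend_apply {A B C : Type} [AddCommGroup A] [Module R A] [AddCommGroup B]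
    [Module R B] [AddCommGroup C] [Module R C] (Ψ : A →ₗ[R] B) (hΨ : Surjective Ψ)
    (Φ : A →ₗ[R] C) (h : LinearMap.ker Ψ ≤ LinearMap.ker Φ) (a : A) :
    descend Ψ hΨ Φ h (Ψ a) = Φ a := by
  have : (LinearMap.codRestrict _ LinearMap.id
      (fun x => by rw [LinearMap.range_eq_top.2 hΨ]; trivial) : B →ₗ[R] _) (Ψ a)
      = ⟨Ψ a, LinearMap.mem_range_self Ψ a⟩ := by
    ext; simp
  rw [descend, LinearMap.comp_apply, this, onRange_apply]

/-- Independence of the extension property from the chosen projective presentation. -/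
lemma ep_indep {F F' X M : Type} [AddCommGroup F] [Module R F] [AddCommGroup F'] [Module R F']
    [AddCommGroup X] [Module R X] [AddCommGroup M] [Module R M]
    [Module.Projective R F] [Module.Projective R F']
    (π : F →ₗ[R] X) (π' : F' →ₗ[R] X) (hπ : Surjective π) (hπ' : Surjective π')
    (h : Ep R (LinearMap.ker π) M) : Ep R (LinearMap.ker π') M := by
  obtain ⟨α, hα⟩ := Module.projective_lifting_property π π' hπ
  obtain ⟨β, hβ⟩ := Module.projective_lifting_property π' π hπ'
  intro φ'
  have hβk : ∀ x ∈ LinearMap.ker π, β x ∈ LinearMap.ker π' := by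
    intro x hx
    simp only [LinearMap.mem_ker] at hx ⊢
    rw [← LinearMap.comp_apply, hβ, hx]
  obtain ⟨ψ, hψ⟩ := h (φ' ∘ₗ β.restrict hβk)
  have hmem : ∀ x : F', x - β (α x) ∈ LinearMap.ker π' := by
    intro x
    have h1 : π (α x) = π' x := by rw [← LinearMap.comp_apply, hα]
    have h2 : π' (β (α x)) = π (α x) := by rw [← LinearMap.comp_apply, hβ]
    simp [LinearMap.mem_ker, map_sub, h1, h2]
  refine ⟨φ' ∘ₗ (LinearMap.id - β ∘ₗ α).codRestrict _ hmem + ψ ∘ₗ α, ?_⟩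
  intro x hx
  have hax : α x ∈ LinearMap.ker π := by
    simp only [LinearMap.mem_ker]
    rw [← LinearMap.comp_apply, hα]; exact hx
  simp only [LinearMap.add_apply, LinearMap.comp_apply, LinearMap.codRestrict_apply]
  rw [hψ _ hax, LinearMap.comp_apply, LinearMap.restrict_apply, ← map_add]
  congr 1
  ext
  simp

section Shift

variable {G E : Type} [AddCommGroup G] [Module R G] [AddCommGroup E] [Module R E]
  (ι : G →ₗ[R] E) [Module.Injective R E]

/-- Dimension shifting at the module level: for a projective presentation
`0 → ker ρ → F₁ → N → 0` of a submodule `N` of a projective module `F₀`,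
extensions with values in `G` out of `ker ρ` correspond to extensions with values
in `E ⧸ G` out of `N`. -/
lemma ep_shift (hι : Injective ι) {F₁ F₀ : Type} [AddCommGroup F₁] [Module R F₁]
    [AddCommGroup F₀] [Module R F₀] [Module.Projective R F₁] [Module.Projective R F₀]
    (N : Submodule R F₀) (ρ : F₁ →ₗ[R] N) (hρ : Surjective ρ) :
    Ep R (LinearMap.ker ρ) G ↔ Ep R N (E ⧸ LinearMap.range ι) := by
  set q := (LinearMap.range ι).mkQ with hq
  have hqs : Surjective q := Submodule.mkQ_surjective _
  have hkerq : LinearMap.ker q = LinearMap.range ι := Submodule.ker_mkQ _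
  set e := LinearEquiv.ofInjective ι hι with he
  have hecoe : ∀ g : G, (e g : E) = ι g := fun g => rfl
  have hesymm : ∀ y : LinearMap.range ι, ι (e.symm y) = (y : E) := by
    intro y; rw [← hecoe, e.apply_symm_apply]
  constructor
  · intro h φ
    obtain ⟨hE, hhE⟩ := Module.projective_lifting_property q (φ ∘ₗ ρ) hqs
    have hSmem : ∀ s ∈ LinearMap.ker ρ, hE s ∈ LinearMap.range ι := by
      intro s hs
      rw [← hkerq, LinearMap.mem_ker, ← LinearMap.comp_apply, hhE, LinearMap.comp_apply,
        (LinearMap.mem_ker).1 hs, map_zero]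
    set ψ₀ : LinearMap.ker ρ →ₗ[R] G :=
      e.symm.toLinearMap ∘ₗ LinearMap.codRestrict _ (hE ∘ₗ (LinearMap.ker ρ).subtype)
        (fun s => hSmem s s.2) with hψ₀
    obtain ⟨ψ, hψ⟩ := h ψ₀
    set g' : F₁ →ₗ[R] E := hE - ι ∘ₗ ψ with hg'
    have hkerg' : LinearMap.ker ρ ≤ LinearMap.ker g' := by
      intro s hs
      rw [LinearMap.mem_ker, hg', LinearMap.sub_apply, LinearMap.comp_apply, hψ s hs, hψ₀,
        sub_eq_zero, LinearMap.comp_apply, LinearEquiv.coe_coe, hesymm]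
      rfl
    set g : N →ₗ[R] E := descend ρ hρ g' hkerg' with hgdef
    have hqg : ∀ y : N, q (g y) = φ y := by
      intro y
      obtain ⟨x, rfl⟩ := hρ y
      rw [hgdef, descend_apply, hg', LinearMap.sub_apply, map_sub, LinearMap.comp_apply,
        ← LinearMap.comp_apply q hE, hhE]
      have : q (ι (ψ x)) = 0 := by
        rw [← LinearMap.mem_ker, hkerq]; exact LinearMap.mem_range_self _ _
      rw [this, sub_zero, LinearMap.comp_apply]
    obtain ⟨gbar, hgbar⟩ := Module.Injective.out N.subtype N.injective_subtype g
    refine ⟨q ∘ₗ gbar, fun x hx => ?_⟩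
    rw [LinearMap.comp_apply, show gbar x = g ⟨x, hx⟩ from hgbar ⟨x, hx⟩, hqg]
  · intro h ψ₀
    obtain ⟨hE, hhE⟩ := Module.Injective.out (LinearMap.ker ρ).subtype
      (Submodule.injective_subtype _) (ι ∘ₗ ψ₀)
    have hker1 : LinearMap.ker ρ ≤ LinearMap.ker (q ∘ₗ hE) := by
      intro s hs
      rw [LinearMap.mem_ker, LinearMap.comp_apply]
      have : hE s = ι (ψ₀ ⟨s, hs⟩) := hhE ⟨s, hs⟩
      rw [this, ← LinearMap.mem_ker, hkerq]
      exact LinearMap.mem_range_self _ _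
    set g : N →ₗ[R] E ⧸ LinearMap.range ι := descend ρ hρ (q ∘ₗ hE) hker1 with hgdef
    obtain ⟨gbar, hgbar⟩ := h g
    obtain ⟨H, hH⟩ := Module.projective_lifting_property q gbar hqs
    set g'' : F₁ →ₗ[R] E := hE - H ∘ₗ (N.subtype ∘ₗ ρ) with hg''
    have hg''mem : ∀ x : F₁, g'' x ∈ LinearMap.range ι := by
      intro x
      rw [← hkerq, LinearMap.mem_ker, hg'', LinearMap.sub_apply, map_sub]
      have h1 : q (hE x) = g (ρ x) := (descend_apply ρ hρ (q ∘ₗ hE) hker1 x).symm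
      have h2 : q (H (N.subtype (ρ x))) = gbar (N.subtype (ρ x)) := by
        rw [← LinearMap.comp_apply q H, hH]
      rw [LinearMap.comp_apply, LinearMap.comp_apply, h1, h2,
        show gbar (N.subtype (ρ x)) = g ⟨N.subtype (ρ x), (ρ x).2⟩ from hgbar _ (ρ x).2]
      simp [sub_eq_zero]
    refine ⟨e.symm.toLinearMap ∘ₗ LinearMap.codRestrict _ g'' hg''mem, fun s hs => ?_⟩
    rw [LinearMap.comp_apply, LinearEquiv.coe_coe]
    apply hι
    rw [hesymm]
    have hρs : ρ s = 0 := (LinearMap.mem_ker).1 hs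
    have : (LinearMap.codRestrict _ g'' hg''mem s : E) = g'' s := rfl
    rw [this, hg'', LinearMap.sub_apply, LinearMap.comp_apply, LinearMap.comp_apply, hρs,
      map_zero, map_zero, sub_zero]
    exact (hhE ⟨s, hs⟩).trans rfl

end Shift

/-- Baer-style Noetherian induction: if every linear map from a prime ideal to `C` extends
to `R`, then the same holds for every ideal. -/
lemma baer_induction [IsNoetherianRing R] (C : Type) [AddCommGroup C] [Module R C]
    (hprime : ∀ 𝔭 : Ideal R, 𝔭.IsPrime → Ep R (𝔭 : Submodule R R) C)
    (J : Ideal R) : Ep R (J : Submodule R R) C := by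
  have wf : WellFoundedGT (Ideal R) := isNoetherian_iff'.mp ‹IsNoetherianRing R›
  induction J using WellFoundedGT.induction with
  | _ J ih =>
  by_cases htop : J = ⊤
  · subst htop
    intro f
    exact ⟨f ∘ₗ LinearMap.codRestrict _ LinearMap.id (fun x => Submodule.mem_top),
      fun x hx => rfl⟩
  by_cases hp : J.IsPrime
  · exact hprime J hp
  rw [Ideal.isPrime_iff] at hp
  push_neg at hp
  obtain ⟨a, b, hab, ha, hb⟩ := hp htop
  intro f
  set Jc : Ideal R := Submodule.comap (LinearMap.toSpanSingleton R R a) J with hJc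
  have haJc : ∀ r : R, r ∈ Jc ↔ r * a ∈ J := by
    intro r
    simp [hJc, LinearMap.toSpanSingleton_apply, smul_eq_mul]
  have hJJc : J < Jc := by
    refine lt_of_le_not_ge (fun x hx => (haJc x).2 (Ideal.mul_mem_right a J hx)) (fun hle => hb ?_)
    exact hle ((haJc b).2 (by rwa [mul_comm] at hab))
  have hres : ∀ x ∈ Jc, LinearMap.toSpanSingleton R R a x ∈ J := fun x hx => hx
  obtain ⟨H, hH⟩ := ih Jc hJJc (f ∘ₗ (LinearMap.toSpanSingleton R R a).restrict hres)
  set J₂ : Ideal R := J ⊔ Ideal.span {a} with hJ₂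
  have hJJ₂ : J < J₂ := by
    refine lt_of_le_not_ge le_sup_left (fun hle => ha ?_)
    exact hle (Submodule.mem_sup_right (Ideal.subset_span (Set.mem_singleton a)))
  set c : C := H 1 with hc
  have hHr : ∀ r : R, H r = r • c := by
    intro r
    rw [hc, ← map_smul, smul_eq_mul, mul_one]
  set Φ : (J × R) →ₗ[R] C := LinearMap.coprod f (LinearMap.toSpanSingleton R C c) with hΦ
  set Ψ : (J × R) →ₗ[R] R := LinearMap.coprod (Submodule.subtype J)
    (LinearMap.toSpanSingleton R R a) with hΨ
  have hker : LinearMap.ker Ψ ≤ LinearMap.ker Φ := by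
    rintro ⟨x, r⟩ hxr
    rw [LinearMap.mem_ker, hΨ, LinearMap.coprod_apply, LinearMap.toSpanSingleton_apply,
      smul_eq_mul] at hxr
    have hra : r * a ∈ J := by
      have : r * a = -(x : R) := by
        have hxr' : (x : R) + r * a = 0 := hxr
        linear_combination hxr'
      rw [this]
      exact J.neg_mem x.2
    have hrJc : r ∈ Jc := (haJc r).2 hra
    rw [LinearMap.mem_ker, hΦ, LinearMap.coprod_apply, LinearMap.toSpanSingleton_apply]
    have h1 : r • c = f ⟨r * a, hra⟩ := by
      rw [← hHr, hH r hrJc]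
      rfl
    rw [h1, ← map_add]
    have : (⟨(x : R), x.2⟩ : J) + ⟨r * a, hra⟩ = 0 := by
      ext
      simpa using hxr
    rw [show x + (⟨r * a, hra⟩ : J) = 0 from this, map_zero]
  have hrange : LinearMap.range Ψ = (J₂ : Submodule R R) := by
    rw [hΨ, LinearMap.range_coprod, Submodule.range_subtype, hJ₂, ← Ideal.submodule_span_eq,
      LinearMap.span_singleton_eq_range]
  obtain ⟨F, hF⟩ := ih J₂ hJJ₂
    ((onRange Ψ Φ hker) ∘ₗ (LinearEquiv.ofEq _ _ hrange.symm).toLinearMap)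
  refine ⟨F, fun x hx => ?_⟩
  have hxJ₂ : x ∈ J₂ := Submodule.mem_sup_left hx
  rw [hF x hxJ₂]
  have hx0 : Ψ (⟨x, hx⟩, 0) = x := by
    simp [hΨ]
  have : ((LinearEquiv.ofEq _ _ hrange.symm).toLinearMap ⟨x, hxJ₂⟩ : LinearMap.range Ψ)
      = ⟨Ψ (⟨x, hx⟩, 0), LinearMap.mem_range_self _ _⟩ := by
    ext
    simp [hx0]
  rw [LinearMap.comp_apply, this, onRange_apply]
  simp [hΦ]

/-- `Ext^{n+1}(X, M) = 0` iff the classifying extension property holds for the resolution. -/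
lemma bridge (X M : ModuleCat R) (P : ProjectiveResolution X) (n : ℕ) :
    extZero R (n+1) X M ↔
      ∀ φ : P.complex.X (n+1) ⟶ M, P.complex.d (n+2) (n+1) ≫ φ = 0 →
        ∃ ψ : P.complex.X n ⟶ M, P.complex.d (n+1) n ≫ ψ = φ := by
  rw [extZero, (P.isoExt (n+1) M).isZero_iff, ← HomologicalComplex.exactAt_iff_isZero_homology,
    HomologicalComplex.exactAt_iff' _ n (n+1) (n+2) (by simp) (by simp),
    ShortComplex.moduleCat_exact_iff]
  constructor
  · intro h φ hφ
    obtain ⟨ψ, hψ⟩ := h φ hφ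
    exact ⟨ψ, hψ⟩
  · intro h φ hφ
    obtain ⟨ψ, hψ⟩ := h φ hφ
    exact ⟨ψ, hψ⟩

/-- `Ext^{n+1}(X, M) = 0` iff every map from the `n`-th syzygy extends. -/
lemma extZero_succ_iff (X M : ModuleCat R) (P : ProjectiveResolution X) (n : ℕ) :
    extZero R (n+1) X M ↔ Ep R (LinearMap.range (P.complex.d (n+1) n).hom) M := by
  have hexact : LinearMap.range (P.complex.d (n+2) (n+1)).hom
      = LinearMap.ker (P.complex.d (n+1) n).hom :=
    (ShortComplex.moduleCat_exact_iff_range_eq_ker _).1 (P.exact_succ n)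
  rw [bridge X M P n]
  set u := (P.complex.d (n+1) n).hom with hu
  set v := (P.complex.d (n+2) (n+1)).hom with hv
  constructor
  · intro h f
    have hφ : P.complex.d (n+2) (n+1) ≫ ModuleCat.ofHom (f ∘ₗ u.rangeRestrict) = 0 := by
      refine ModuleCat.hom_ext (LinearMap.ext fun z => ?_)
      have : u (v z) = 0 := by
        rw [← LinearMap.mem_ker, ← hexact]; exact LinearMap.mem_range_self v z
      show f (u.rangeRestrict (v z)) = 0
      have h2 : u.rangeRestrict (v z) = 0 := by ext; simpa using this
      rw [h2, map_zero]
    obtain ⟨ψ, hψ⟩ := h (ModuleCat.ofHom (f ∘ₗ u.rangeRestrict)) hφ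
    refine ⟨ψ.hom, fun x hx => ?_⟩
    obtain ⟨a, rfl⟩ := hx
    have h3 : ψ.hom (u a) = f (u.rangeRestrict a) :=
      (congrArg (fun (t : P.complex.X (n+1) ⟶ M) => t.hom a) hψ : ψ.hom (u a) = f (u.rangeRestrict a))
    show ψ.hom (u a) = _
    rw [h3]
    congr 1
  · intro h φ hφ
    have hker : LinearMap.ker u ≤ LinearMap.ker φ.hom := by
      rw [← hexact]
      rintro x ⟨z, rfl⟩
      have := congrArg (fun (t : P.complex.X (n+2) ⟶ M) => t.hom z) hφ
      simpa using this
    obtain ⟨ψ, hψ⟩ := h (onRange u φ.hom hker)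
    refine ⟨ModuleCat.ofHom ψ, ModuleCat.hom_ext (LinearMap.ext fun a => ?_)⟩
    show ψ (u a) = φ.hom a
    rw [hψ _ (LinearMap.mem_range_self u a), onRange_apply]

lemma modProjective (Y : ModuleCat R) [Projective Y] : Module.Projective R Y :=
  inferInstance

end Stmt5Aux

/-- Over a commutative Noetherian ring, with `𝒰 = {G : Ext²(R/𝔭, G) = 0 for all primes 𝔭}`,
every ideal `I` satisfies `Ext¹(I, G) = 0` for all `G ∈ 𝒰`, i.e. `R` is `𝒰`-hereditary. -/
theorem stmt5 (R : Type) [CommRing R] [IsNoetherianRing R]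
    (𝒰 : ModuleCat R → Prop)
    (h𝒰 : ∀ G, 𝒰 G ↔ ∀ 𝔭 : Ideal R, 𝔭.IsPrime → extZero R 2 (ModuleCat.of R (R ⧸ 𝔭)) G)
    (I : Ideal R) :
    ∀ G, 𝒰 G → extZero R 1 (ModuleCat.of R (↥I)) G := by
  intro G hG
  classical
  open Stmt5Aux in
  -- embed `G` into an injective module `E`, with cokernel `C`
  letI : EnoughInjectives (ModuleCat R) := inferInstance
  set E : ModuleCat R := Injective.under G with hE
  set ι : G ⟶ E := Injective.ι G with hι0
  have hι : Function.Injective ι := (ModuleCat.mono_iff_injective ι).mp inferInstance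
  haveI hEinj : Module.Injective R ↥E :=
    Module.injective_module_of_injective_object R ↥E
      (inj := show Injective (ModuleCat.of R ↥E) from (inferInstance : Injective E))
  -- the key extension property for every prime ideal, with values in `C = E ⧸ G`
  have hprime : ∀ 𝔭 : Ideal R, 𝔭.IsPrime →
      Ep R (𝔭 : Submodule R R) (↥E ⧸ LinearMap.range (ι.hom : ↥G →ₗ[R] ↥E)) := by
    intro 𝔭 hp
    have h2 : extZero R (1+1) (ModuleCat.of R (R ⧸ 𝔭)) G := (h𝒰 G).mp hG 𝔭 hp
    set Q := projectiveResolution (ModuleCat.of R (R ⧸ 𝔭)) with hQ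
    haveI := modProjective (Q.complex.X 0)
    haveI := modProjective (Q.complex.X 1)
    have e1 : Ep R (LinearMap.range (Q.complex.d 2 1).hom) ↥G :=
      (extZero_succ_iff _ G Q 1).mp h2
    rw [(ShortComplex.moduleCat_exact_iff_range_eq_ker _).1 (Q.exact_succ 0), ← LinearMap.ker_rangeRestrict] at e1
    have e2 : Ep R (LinearMap.range (Q.complex.d 1 0).hom) (↥E ⧸ LinearMap.range (ι.hom : ↥G →ₗ[R] ↥E)) :=
      (ep_shift ι.hom hι _ _ (LinearMap.surjective_rangeRestrict _)).mp e1
    have hπ : Function.Surjective (Q.π.f 0).hom := (ModuleCat.epi_iff_surjective _).mp inferInstance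
    rw [(ShortComplex.moduleCat_exact_iff_range_eq_ker _).1 Q.exact₀] at e2
    have e3 := ep_indep (Q.π.f 0).hom (Submodule.mkQ (𝔭 : Submodule R R)) hπ
      (Submodule.mkQ_surjective _) e2
    erw [Submodule.ker_mkQ] at e3; exact e3
  have hall := baer_induction _ hprime
  -- now conclude for the ideal `I`
  set P := projectiveResolution (ModuleCat.of R (↥I)) with hP
  haveI := modProjective (P.complex.X 0)
  have hπ : Function.Surjective (P.π.f 0).hom := (ModuleCat.epi_iff_surjective _).mp inferInstance
  have goal1 : Ep R (LinearMap.range (P.complex.d 1 0).hom) ↥G := by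
    rw [(ShortComplex.moduleCat_exact_iff_range_eq_ker _).1 P.exact₀]
    exact (ep_shift ι.hom hι (I : Submodule R R) (P.π.f 0).hom hπ).mpr (hall I)
  exact (extZero_succ_iff _ G P 0).mpr goal1
end

section
/- If R is a 𝒰_𝒳-hereditary ring, then every 𝒳-injective R-module U has injective dimension at most 1. -/
open CategoryTheory Limits Opposite

section Aux

variable {R : Type} [Ring R]

lemma extZero_iff_lift (X M : ModuleCat R) (P : ProjectiveResolution X) (n : ℕ) :
    extZero R (n+1) X M ↔
    ∀ φ : P.complex.X (n+1) ⟶ M, P.complex.d (n+2) (n+1) ≫ φ = 0 →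
      ∃ ψ : P.complex.X n ⟶ M, P.complex.d (n+1) n ≫ ψ = φ := by
  have e := P.isoExt (R := ℤ) (n+1) M
  have h1 : extZero R (n+1) X M ↔
      IsZero ((P.complex.linearYonedaObj ℤ M).homology (n+1)) :=
    ⟨fun h => h.of_iso e.symm, fun h => h.of_iso e⟩
  rw [h1, ← HomologicalComplex.exactAt_iff_isZero_homology]
  rw [HomologicalComplex.exactAt_iff' _ n (n+1) (n+2) (by simp) (by simp)]
  rw [ShortComplex.moduleCat_exact_iff]
  constructor
  · intro h φ hφ
    obtain ⟨ψ, hψ⟩ := h φ hφ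
    exact ⟨ψ, hψ⟩
  · intro h φ hφ
    obtain ⟨ψ, hψ⟩ := h φ hφ
    exact ⟨ψ, hψ⟩

lemma injective_module_of_inj (M : ModuleCat R) (h : Injective M) : Module.Injective R M := by
  have : Injective (ModuleCat.of R M) := h
  exact Module.injective_module_of_injective_object R M

lemma extZero_of_injective (X M : ModuleCat R) (hM : Injective M) (n : ℕ) :
    extZero R (n+1) X M := by
  obtain ⟨P⟩ := (HasProjectiveResolution.out (Z := X))
  rw [extZero_iff_lift X M P n]
  intro φ hφ
  have hinj := injective_module_of_inj M hM
  set d1 : P.complex.X (n+1) →ₗ[R] P.complex.X n := (P.complex.d (n+1) n).hom with hd1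
  have hker : ∀ x, d1 x = 0 → φ x = 0 := by
    intro x hx
    have hex := P.exact_succ n
    rw [ShortComplex.moduleCat_exact_iff] at hex
    obtain ⟨y, hy⟩ := hex x hx
    have h0 : (P.complex.d (n+2) (n+1) ≫ φ) y = 0 := by rw [hφ]; rfl
    have : φ (P.complex.d (n+2) (n+1) y) = 0 := h0
    rwa [hy] at this
  let f0 : (P.complex.X (n+1) ⧸ LinearMap.ker d1) →ₗ[R] M :=
    Submodule.liftQ _ φ.hom (fun x hx => hker x hx)
  let eq1 := d1.quotKerEquivRange
  let g : LinearMap.range d1 →ₗ[R] M := f0 ∘ₗ (eq1.symm : _ →ₗ[R] _)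
  obtain ⟨h, hh⟩ := hinj.out (LinearMap.range d1).subtype
    (Submodule.injective_subtype _) g
  refine ⟨ModuleCat.ofHom h, ?_⟩
  ext x
  have h1 : (h : P.complex.X n →ₗ[R] M) (d1 x) = g ⟨d1 x, LinearMap.mem_range_self d1 x⟩ :=
    hh ⟨d1 x, LinearMap.mem_range_self d1 x⟩
  have h2 : eq1 (Submodule.Quotient.mk x) = ⟨d1 x, LinearMap.mem_range_self d1 x⟩ :=
    Subtype.ext (d1.quotKerEquivRange_apply_mk x)
  have h3 : eq1.symm ⟨d1 x, LinearMap.mem_range_self d1 x⟩ = Submodule.Quotient.mk x := by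
    rw [← h2, LinearEquiv.symm_apply_apply]
  have h5 : g ⟨d1 x, LinearMap.mem_range_self d1 x⟩ = φ x := by
    simp only [g, f0, LinearMap.comp_apply, LinearEquiv.coe_coe, h3]
    rfl
  exact h1.trans h5

lemma factor_through_mono_s7 {A U E : ModuleCat R} (i : U ⟶ E) (hi : Function.Injective i)
    (θ : A ⟶ E) (hrange : ∀ x, θ x ∈ LinearMap.range i.hom) :
    ∃ τ : A ⟶ U, τ ≫ i = θ := by
  let e := LinearEquiv.ofInjective i.hom hi
  let τ : A →ₗ[R] U := (e.symm : _ →ₗ[R] _) ∘ₗ θ.hom.codRestrict (LinearMap.range i.hom) hrange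
  refine ⟨ModuleCat.ofHom τ, ?_⟩
  ext x
  have h1 := e.apply_symm_apply ⟨θ x, hrange x⟩
  have h2 : ∀ u : U, (e u : E) = i u := fun u => rfl
  show i (τ x) = θ x
  have : (e (e.symm ⟨θ x, hrange x⟩) : E) = θ x := by rw [h1]
  rwa [h2] at this

lemma extZero_two_of_ses (N U E C' : ModuleCat R) (i : U ⟶ E) (p : E ⟶ C')
    (hi : Function.Injective i) (hp : Function.Surjective p) (hip : i ≫ p = 0)
    (hexact : ∀ e : E, p e = 0 → ∃ u, i u = e)
    (hE : Injective E) (hC : extZero R 1 N C') : extZero R 2 N U := by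
  obtain ⟨P⟩ := (HasProjectiveResolution.out (Z := N))
  refine (extZero_iff_lift N U P 1).2 ?_
  intro φ hφ
  obtain ⟨ψ, hψ⟩ := (extZero_iff_lift N E P 1).1 (extZero_of_injective N E hE 1)
    (φ ≫ i) (by rw [← Category.assoc, hφ, zero_comp])
  obtain ⟨χ, hχ⟩ := (extZero_iff_lift N C' P 0).1 hC (ψ ≫ p)
    (by rw [← Category.assoc, hψ, Category.assoc, hip, comp_zero])
  have hpepi : Epi p := (ModuleCat.epi_iff_surjective p).2 hp
  let χ' : P.complex.X 0 ⟶ E := Projective.factorThru χ p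
  have hχ' : χ' ≫ p = χ := Projective.factorThru_comp χ p
  let θ : P.complex.X (0+1) ⟶ E := ψ - P.complex.d (0+1) 0 ≫ χ'
  have hθp : θ ≫ p = 0 := by
    simp only [θ, Preadditive.sub_comp, Category.assoc, hχ', hχ, sub_self]
  have hrange : ∀ x, θ x ∈ LinearMap.range i.hom := by
    intro x
    have h0 : p (θ x) = 0 := by
      have : (θ ≫ p) x = 0 := by rw [hθp]; rfl
      exact this
    obtain ⟨u, hu⟩ := hexact (θ x) h0
    exact ⟨u, hu⟩
  obtain ⟨τ, hτ⟩ := factor_through_mono_s7 i hi θ hrange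
  refine ⟨τ, ?_⟩
  ext x
  apply hi
  have h1 : i (τ (P.complex.d (1+1) (0+1) x)) = θ (P.complex.d (1+1) (0+1) x) := by
    have : (τ ≫ i) (P.complex.d (1+1) (0+1) x) = θ (P.complex.d (1+1) (0+1) x) := by rw [hτ]
    exact this
  show i ((P.complex.d (1+1) (0+1) ≫ τ) x) = i (φ x)
  show i (τ (P.complex.d (1+1) (0+1) x)) = i (φ x)
  rw [h1]
  have h2 : θ (P.complex.d (1+1) (0+1) x) =
      ψ (P.complex.d (1+1) (0+1) x) - χ' (P.complex.d (0+1) 0 (P.complex.d (1+1) (0+1) x)) := rfl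
  have h3 : P.complex.d (0+1) 0 (P.complex.d (1+1) (0+1) x) = 0 := by
    have : (P.complex.d (1+1) (0+1) ≫ P.complex.d (0+1) 0) x = (0 : P.complex.X (1+1) ⟶ P.complex.X 0) x := by
      rw [HomologicalComplex.d_comp_d]
    exact this
  have h4 : ψ (P.complex.d (1+1) (0+1) x) = i (φ x) := by
    have : (P.complex.d (1+1) (0+1) ≫ ψ) x = (φ ≫ i) x := by rw [hψ]
    exact this
  rw [h2, h3, h4, map_zero, sub_zero]

lemma lift_along_surjection (U E C' : ModuleCat R) (i : U ⟶ E) (p : E ⟶ C')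
    (hi : Function.Injective i) (hp : Function.Surjective p) (hip : i ≫ p = 0)
    (hexact : ∀ e : E, p e = 0 → ∃ u, i u = e)
    (X : ModuleCat R) (hext : extZero R 1 X U) (f : X ⟶ C') :
    ∃ g : X ⟶ E, g ≫ p = f := by
  obtain ⟨P⟩ := (HasProjectiveResolution.out (Z := X))
  let eT : ((ChainComplex.single₀ (ModuleCat R)).obj X).X 0 ≅ X :=
    HomologicalComplex.singleObjXSelf (ComplexShape.down ℕ) 0 X
  let ε0 : P.complex.X 0 ⟶ ((ChainComplex.single₀ (ModuleCat R)).obj X).X 0 := P.π.f 0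
  have hd0 : P.complex.d 1 0 ≫ ε0 = 0 := P.complex_d_comp_π_f_zero
  have hpepi : Epi p := (ModuleCat.epi_iff_surjective p).2 hp
  let φ : P.complex.X 0 ⟶ C' := ε0 ≫ eT.hom ≫ f
  let ψ : P.complex.X 0 ⟶ E := Projective.factorThru φ p
  have hψ : ψ ≫ p = φ := Projective.factorThru_comp φ p
  let θ : P.complex.X (0+1) ⟶ E := P.complex.d (0+1) 0 ≫ ψ
  have hθp : θ ≫ p = 0 := by
    simp only [θ, Category.assoc, hψ, φ]
    rw [← Category.assoc, ← Category.assoc]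
    rw [show P.complex.d (0+1) 0 ≫ ε0 = 0 from hd0]
    rw [zero_comp, zero_comp]
  have hrange : ∀ x, θ x ∈ LinearMap.range i.hom := by
    intro x
    have h0 : p (θ x) = 0 := by
      have : (θ ≫ p) x = 0 := by rw [hθp]; rfl
      exact this
    obtain ⟨u, hu⟩ := hexact (θ x) h0
    exact ⟨u, hu⟩
  obtain ⟨τ, hτ⟩ := factor_through_mono_s7 i hi θ hrange
  have hτd : P.complex.d (1+1) (0+1) ≫ τ = 0 := by
    ext x
    apply hi
    have h1 : i (τ (P.complex.d (1+1) (0+1) x)) = θ (P.complex.d (1+1) (0+1) x) := by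
      have : (τ ≫ i) (P.complex.d (1+1) (0+1) x) = θ (P.complex.d (1+1) (0+1) x) := by rw [hτ]
      exact this
    show i (τ (P.complex.d (1+1) (0+1) x)) = i ((0 : P.complex.X (1+1) ⟶ U) x)
    rw [h1]
    have h2 : θ (P.complex.d (1+1) (0+1) x) =
        ψ (P.complex.d (0+1) 0 (P.complex.d (1+1) (0+1) x)) := rfl
    have h3 : P.complex.d (0+1) 0 (P.complex.d (1+1) (0+1) x) = 0 := by
      have : (P.complex.d (1+1) (0+1) ≫ P.complex.d (0+1) 0) x
          = (0 : P.complex.X (1+1) ⟶ P.complex.X 0) x := by rw [HomologicalComplex.d_comp_d]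
      exact this
    have h4 : (0 : P.complex.X (1+1) ⟶ U) x = 0 := rfl
    rw [h2, h3, map_zero, h4, map_zero]
  obtain ⟨σ, hσ⟩ := (extZero_iff_lift X U P 0).1 hext τ hτd
  let s : P.complex.X 0 ⟶ E := ψ - σ ≫ i
  have hds : P.complex.d 1 0 ≫ s = 0 := by
    simp only [s, Preadditive.comp_sub, ← Category.assoc]
    rw [show P.complex.d 1 0 ≫ σ = τ from hσ, hτ]
    show θ - θ = 0
    simp
  let g0 : ((ChainComplex.single₀ (ModuleCat R)).obj X).X 0 ⟶ E :=
    Cofork.IsColimit.desc P.isColimitCokernelCofork s (by rw [hds, zero_comp])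
  have hg0 : ε0 ≫ g0 = s :=
    Cofork.IsColimit.π_desc P.isColimitCokernelCofork
  refine ⟨eT.inv ≫ g0, ?_⟩
  have hεepi : Epi (ε0 ≫ eT.hom) := epi_comp _ _
  rw [← cancel_epi (ε0 ≫ eT.hom)]
  simp only [Category.assoc, Iso.hom_inv_id_assoc]
  rw [← Category.assoc, hg0]
  show (ψ - σ ≫ i) ≫ p = (ε0 ≫ eT.hom) ≫ f
  rw [Preadditive.sub_comp, hψ, Category.assoc, hip, comp_zero, sub_zero]
  simp only [φ, Category.assoc]

end Aux

/-- If `R` is `𝒰_𝒳`-hereditary (every left ideal `I` satisfies `Ext¹(I, U) = 0` for all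
`𝒳`-injective `U`), then every `𝒳`-injective module has injective dimension at most one. -/
theorem stmt7 (R : Type) [Ring R] (𝒳 : ModuleCat R → Prop)
    (hher : ∀ I : Ideal R, ∀ U : ModuleCat R, IsXInjective R 𝒳 U →
      extZero R 1 (ModuleCat.of R (↥I)) U) :
    ∀ U : ModuleCat R, IsXInjective R 𝒳 U → ∀ N : ModuleCat R, extZero R 2 N U := by
  intro U hU N
  let E := Injective.under U
  let i : U ⟶ E := Injective.ι U
  let C' := cokernel i
  let p : E ⟶ C' := cokernel.π i
  have hi : Function.Injective i := (ModuleCat.mono_iff_injective i).1 inferInstance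
  have hp : Function.Surjective p := (ModuleCat.epi_iff_surjective p).1 inferInstance
  have hip : i ≫ p = 0 := cokernel.condition i
  have hexact : ∀ e : E, p e = 0 → ∃ u, i u = e := by
    have hEx : (ShortComplex.mk i p hip).Exact :=
      ShortComplex.exact_of_g_is_cokernel _ (cokernelIsCokernel i)
    rw [ShortComplex.moduleCat_exact_iff] at hEx
    exact hEx
  have hE : Injective E := Injective.injective_under U
  have hBaer : Module.Baer R C' := by
    intro I g
    have hext : extZero R 1 (ModuleCat.of R I) U := hher I U hU
    obtain ⟨g', hg'⟩ := lift_along_surjection U E C' i p hi hp hip hexact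
      (ModuleCat.of R ↥I) hext (ModuleCat.ofHom g)
    have hEmod : Module.Injective R E := injective_module_of_inj E hE
    obtain ⟨h, hh⟩ := hEmod.out (I.subtype) (Submodule.injective_subtype I)
      g'.hom
    refine ⟨p.hom ∘ₗ h, fun x mem => ?_⟩
    have h1 : h x = g' ⟨x, mem⟩ := hh ⟨x, mem⟩
    show p (h x) = g ⟨x, mem⟩
    rw [h1]
    have h2 : (ModuleCat.ofHom g ≫ (0 : C' ⟶ C')) = 0 := by simp
    have : (g' ≫ p) ⟨x, mem⟩ = (ModuleCat.ofHom g) ⟨x, mem⟩ := by rw [hg']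
    exact this
  have hCinj : Injective C' := by
    have h1 : Module.Injective R C' := hBaer.injective
    have : Injective (ModuleCat.of R ↥C') := Module.injective_object_of_injective_module R C'
    exact this
  exact extZero_two_of_ses N U E C' i p hi hp hip hexact hE
    (extZero_of_injective N C' hCinj 0)
end

section
/- Let M be a submodule of an 𝒳-injective module L such that the inclusion i : M → L is an 𝒳-injective envelope. If L/M is 𝒰_𝒳-projective, then: there is no direct summand L₁ of L with L₁ ≠ L and M ⊆ L₁; equivalently, for any epimorphism α : L/M → N such that α∘π is a split epimorphism (π : L → L/M canonical), N = 0. -/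
open CategoryTheory Limits Opposite

/-- `M` is `𝒰_𝒳`-projective if `Ext¹(M, U) = 0` for every `𝒳`-injective module `U`. -/
def IsUXProjective (R : Type) [Ring R] (𝒳 : ModuleCat R → Prop) (M : ModuleCat R) : Prop :=
  ∀ U : ModuleCat R, IsXInjective R 𝒳 U → extZero R 1 M U

/-- Let `M` be a submodule of an `𝒳`-injective module `L` such that the inclusion `M → L`
is an `𝒳`-injective envelope and `L/M` is `𝒰_𝒳`-projective.  Then `L` has no proper direct
summand containing `M`, and every epimorphism `α : L/M → N` such that `α ∘ π` splits has
`N = 0`. -/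
theorem stmt13 (R : Type) [Ring R] (𝒳 : ModuleCat R → Prop)
    (L : Type) [AddCommGroup L] [Module R L] (M : Submodule R L)
    (hL : IsXInjective R 𝒳 (ModuleCat.of R L))
    (hfac : ∀ (L' : Type) [AddCommGroup L'] [Module R L'],
      IsXInjective R 𝒳 (ModuleCat.of R L') → ∀ f : (↥M) →ₗ[R] L',
        ∃ g : L →ₗ[R] L', g.comp M.subtype = f)
    (hmin : ∀ γ : L →ₗ[R] L, γ.comp M.subtype = M.subtype → Function.Bijective γ)
    (hproj : IsUXProjective R 𝒳 (ModuleCat.of R (L ⧸ M))) :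
    (∀ L₁ L₂ : Submodule R L, IsCompl L₁ L₂ → M ≤ L₁ → L₁ = ⊤) ∧
    (∀ (N : Type) [AddCommGroup N] [Module R N] (α : (L ⧸ M) →ₗ[R] N),
      Function.Surjective α →
        (∃ s : N →ₗ[R] L, (α.comp M.mkQ).comp s = LinearMap.id) → Subsingleton N) := by
  have part1 : ∀ L₁ L₂ : Submodule R L, IsCompl L₁ L₂ → M ≤ L₁ → L₁ = ⊤ := by
    intro L₁ L₂ hc hML₁
    set γ : L →ₗ[R] L := L₁.subtype.comp (L₁.projectionOnto L₂ hc) with hγ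
    have hγfix : γ.comp M.subtype = M.subtype := by
      ext m
      simp [hγ, Submodule.projectionOnto_apply_left hc ⟨(m : L), hML₁ m.2⟩]
    have hbij := hmin γ hγfix
    have hL₂ : L₂ = ⊥ := by
      ext x
      simp only [Submodule.mem_bot]
      constructor
      · intro hx
        have h0 : γ x = γ 0 := by
          simp [hγ, Submodule.projectionOnto_apply_right hc ⟨x, hx⟩]
        exact hbij.1 h0
      · rintro rfl; exact L₂.zero_mem
    have := hc.sup_eq_top
    rw [hL₂, sup_bot_eq] at this
    exact this
  refine ⟨part1, ?_⟩
  intro N _ _ α hsurj ⟨s, hs⟩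
  set β : L →ₗ[R] N := α.comp M.mkQ with hβ
  have hβs : ∀ n, β (s n) = n := fun n => congrArg (· n) hs
  have hcompl : IsCompl (LinearMap.ker β) (LinearMap.range s) := by
    constructor
    · rw [disjoint_iff_inf_le]
      rintro x ⟨hx1, n, rfl⟩
      have : n = 0 := by rw [← hβs n]; exact hx1
      simp [this]
    · rw [codisjoint_iff_le_sup]
      intro x _
      have : x = (x - s (β x)) + s (β x) := by abel
      rw [this]
      refine Submodule.add_mem_sup ?_ ⟨β x, rfl⟩
      simp [LinearMap.mem_ker, hβs]
  have hMker : M ≤ LinearMap.ker β := by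
    intro m hm
    simp [hβ, LinearMap.mem_ker, (Submodule.Quotient.mk_eq_zero M).2 hm]
  have hker : LinearMap.ker β = ⊤ := part1 _ _ hcompl hMker
  have hβ0 : ∀ x : L, β x = 0 := fun x => LinearMap.mem_ker.mp (hker ▸ Submodule.mem_top : x ∈ LinearMap.ker β)
  refine subsingleton_of_forall_eq 0 fun n => ?_
  obtain ⟨q, rfl⟩ := hsurj n
  obtain ⟨x, rfl⟩ := M.mkQ_surjective q
  exact hβ0 x
end

section
/- Suppose M is a submodule of an 𝒳-injective module L, L/M is 𝒰_𝒳-projective, and every endomorphism γ of L with γ∘i = i (where i : M → L is the inclusion) is a monomorphism. If M admits an 𝒳-injective envelope, then i : M → L is an 𝒳-injective envelope of M. -/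
open CategoryTheory Limits Opposite

noncomputable section
variable {R : Type} [Ring R]

lemma extend_of_extZero {A L' : Type} [AddCommGroup A] [Module R A]
    [AddCommGroup L'] [Module R L'] (N : Submodule R A)
    (h : extZero R 1 (ModuleCat.of R (A ⧸ N)) (ModuleCat.of R L'))
    (f : (↥N) →ₗ[R] L') : ∃ g : A →ₗ[R] L', g.comp N.subtype = f := by
  set C : ModuleCat R := ModuleCat.of R (A ⧸ N) with hC
  set L'' : ModuleCat R := ModuleCat.of R L' with hL''
  obtain ⟨P⟩ := (inferInstance : HasProjectiveResolution C).out
  -- homology of yoneda complex at 1 is zero, hence exactness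
  have hz : IsZero ((P.complex.linearYonedaObj ℤ L'').homology 1) :=
    h.of_iso (P.isoExt 1 L'').symm
  have hex : (P.complex.linearYonedaObj ℤ L'').ExactAt 1 := by
    rw [HomologicalComplex.exactAt_iff_isZero_homology]; exact hz
  have hex' := (HomologicalComplex.exactAt_iff' (P.complex.linearYonedaObj ℤ L'') 0 1 2
      (by simp) (by simp)).1 hex
  rw [ShortComplex.moduleCat_exact_iff_ker_sub_range] at hex'
  -- concrete data
  let P0 : ModuleCat R := P.complex.X 0
  let P1 : ModuleCat R := P.complex.X 1
  let π₀ : P0 →ₗ[R] (A ⧸ N) := (P.π.f 0).hom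
  have hπ₀ : Function.Surjective π₀ :=
    (ModuleCat.epi_iff_surjective (P.π.f 0)).1 inferInstance
  let mkQ' : ModuleCat.of R A ⟶ C := ModuleCat.ofHom N.mkQ
  have : Epi mkQ' := (ModuleCat.epi_iff_surjective _).2 N.mkQ_surjective
  let q : P0 →ₗ[R] A := (Projective.factorThru (X := C) (P.π.f 0) mkQ').hom
  have hq : ∀ x : P0, N.mkQ (q x) = π₀ x := by
    intro x
    have := Projective.factorThru_comp (X := C) (P.π.f 0) mkQ'
    exact congrArg (fun (φ : P0 ⟶ C) => φ x) this
  let K : Submodule R P0 := LinearMap.ker π₀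
  let d10 : P1 →ₗ[R] P0 := (P.complex.d 1 0).hom
  have hd10π : ∀ x : P1, π₀ (d10 x) = 0 := by
    intro x
    exact congrArg (fun (φ : P1 ⟶ C) => φ x) P.complex_d_comp_π_f_zero
  -- exactness of the resolution at 0
  have hKrange : K ≤ LinearMap.range d10 := by
    have := P.exact₀
    rw [ShortComplex.moduleCat_exact_iff_ker_sub_range] at this
    exact this
  -- corestriction
  let c : P1 →ₗ[R] (↥K) := LinearMap.codRestrict K d10 (fun x => hd10π x)
  have hc : Function.Surjective c := by
    rintro ⟨k, hk⟩
    obtain ⟨y, hy⟩ := hKrange hk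
    exact ⟨y, Subtype.ext hy⟩
  -- the map K → N induced by q
  have hqK : ∀ k : ↥K, q (k : P0) ∈ N := by
    rintro ⟨k, hk⟩
    have : N.mkQ (q k) = 0 := by rw [hq]; exact hk
    simpa [Submodule.Quotient.mk_eq_zero] using this
  let r : (↥K) →ₗ[R] (↥N) := LinearMap.codRestrict N (q.comp K.subtype) hqK
  let f' : (↥K) →ₗ[R] L' := f.comp r
  -- φ : P1 ⟶ L'' is a cocycle
  let φ : P1 ⟶ L'' := ModuleCat.ofHom (f'.comp c)
  have hφmem : φ ∈ LinearMap.ker ((P.complex.linearYonedaObj ℤ L'').d 1 2).hom := by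
    have hd : ((P.complex.linearYonedaObj ℤ L'').d 1 2).hom φ = P.complex.d 2 1 ≫ φ := rfl
    have h0 : P.complex.d 2 1 ≫ φ = 0 := by
      ext x
      have h1 : d10 (P.complex.d 2 1 x) = 0 :=
        congrArg (fun (ψ : P.complex.X 2 ⟶ P0) => ψ x) (P.complex.d_comp_d 2 1 0)
      have h2 : c (P.complex.d 2 1 x) = 0 := Subtype.ext h1
      show f' (c (P.complex.d 2 1 x)) = 0
      rw [h2, map_zero]
    exact hd.trans h0
  obtain ⟨ψ', hψ'⟩ := hex' hφmem
  -- ψ' : P0 ⟶ L'' with d10 ≫ ψ' = φ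
  let ψ : P0 →ₗ[R] L' := ψ'.hom
  have hψ : ∀ k : ↥K, ψ (k : P0) = f' k := by
    intro k
    obtain ⟨y, rfl⟩ := hc k
    have heq : (P.complex.d 1 0 ≫ ψ') = φ := hψ'
    exact congrArg (fun (θ : P1 ⟶ L'') => θ y) heq
  -- assemble
  let Φ : (↥N × ↥P0) →ₗ[R] A := N.subtype.coprod q
  let Ψ : (↥N × ↥P0) →ₗ[R] L' := f.coprod ψ
  have hΦ : Function.Surjective Φ := by
    intro a
    obtain ⟨y, hy⟩ := hπ₀ (N.mkQ a)
    have hmem : a - q y ∈ N := by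
      rw [← Submodule.Quotient.mk_eq_zero]
      show N.mkQ (a - q y) = 0
      rw [map_sub, hq, hy, sub_self]
    exact ⟨(⟨a - q y, hmem⟩, y), by simp [Φ]⟩
  have hker : LinearMap.ker Φ ≤ LinearMap.ker Ψ := by
    rintro ⟨n, y⟩ hny
    have hΦny : (n : A) + q y = 0 := hny
    have hqy : q y = -(n : A) := (neg_eq_of_add_eq_zero_right hΦny).symm
    have hyK : y ∈ K := by
      show π₀ y = 0
      rw [← hq, hqy]
      simpa [Submodule.mkQ_apply, Submodule.Quotient.mk_eq_zero] using N.neg_mem n.2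
    have hr : r ⟨y, hyK⟩ = -n := Subtype.ext hqy
    have : Ψ (n, y) = f n + ψ y := rfl
    rw [LinearMap.mem_ker, this, hψ ⟨y, hyK⟩]
    show f n + f (r ⟨y, hyK⟩) = 0
    rw [hr, map_neg, add_neg_cancel]
  -- build g
  let e := Φ.quotKerEquivOfSurjective hΦ
  let g : A →ₗ[R] L' := ((LinearMap.ker Φ).liftQ Ψ hker).comp e.symm.toLinearMap
  have hgΦ : ∀ x, g (Φ x) = Ψ x := by
    intro x
    have he : e (Submodule.Quotient.mk x) = Φ x := rfl
    have : e.symm (Φ x) = Submodule.Quotient.mk x := by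
      rw [← he, LinearEquiv.symm_apply_apply]
    show ((LinearMap.ker Φ).liftQ Ψ hker) (e.symm (Φ x)) = Ψ x
    rw [this]
    exact Submodule.liftQ_apply _ _ _
  refine ⟨g, ?_⟩
  ext n
  have h1 : Φ (n, 0) = (n : A) := by simp [Φ]
  have h2 : Ψ (n, 0) = f n := by simp [Ψ]
  show g ((n : A)) = f n
  rw [← h1, hgΦ, h2]

end

/-- Suppose `M ⊆ L` with `L` `𝒳`-injective, `L/M` `𝒰_𝒳`-projective, and every endomorphism of
`L` fixing `M` pointwise is injective.  If `M` admits an `𝒳`-injective envelope, then the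
inclusion `M → L` is an `𝒳`-injective envelope of `M`. -/
theorem stmt14 (R : Type) [Ring R] (𝒳 : ModuleCat R → Prop)
    (L : Type) [AddCommGroup L] [Module R L] (M : Submodule R L)
    (hL : IsXInjective R 𝒳 (ModuleCat.of R L))
    (hproj : IsUXProjective R 𝒳 (ModuleCat.of R (L ⧸ M)))
    (hmono : ∀ γ : L →ₗ[R] L, γ.comp M.subtype = M.subtype → Function.Injective γ)
    (henv : ∃ (E : Type) (_ : AddCommGroup E) (_ : Module R E) (ψ : (↥M) →ₗ[R] E),
      IsXInjective R 𝒳 (ModuleCat.of R E) ∧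
      (∀ (L' : Type) [AddCommGroup L'] [Module R L'],
        IsXInjective R 𝒳 (ModuleCat.of R L') → ∀ f : (↥M) →ₗ[R] L',
          ∃ g : E →ₗ[R] L', g.comp ψ = f) ∧
      (∀ g : E →ₗ[R] E, g.comp ψ = ψ → Function.Bijective g)) :
    (∀ (L' : Type) [AddCommGroup L'] [Module R L'],
      IsXInjective R 𝒳 (ModuleCat.of R L') → ∀ f : (↥M) →ₗ[R] L',
        ∃ g : L →ₗ[R] L', g.comp M.subtype = f) ∧
    (∀ γ : L →ₗ[R] L, γ.comp M.subtype = M.subtype → Function.Bijective γ) := by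
  have part1 : ∀ (L' : Type) [AddCommGroup L'] [Module R L'],
      IsXInjective R 𝒳 (ModuleCat.of R L') → ∀ f : (↥M) →ₗ[R] L',
        ∃ g : L →ₗ[R] L', g.comp M.subtype = f := by
    intro L' _ _ hL' f
    exact extend_of_extZero M (hproj (ModuleCat.of R L') hL') f
  refine ⟨part1, ?_⟩
  intro γ hγ
  obtain ⟨E, _, _, ψ, hE, hEfac, hEauto⟩ := henv
  obtain ⟨h, hh⟩ := hEfac L hL M.subtype
  obtain ⟨k, hk⟩ := part1 E hE ψ
  have hφ : Function.Bijective (k.comp h) := by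
    apply hEauto
    rw [LinearMap.comp_assoc, hh, hk]
  set φ : E →ₗ[R] E := k.comp h with hφdef
  let φ' : E ≃ₗ[R] E := LinearEquiv.ofBijective φ hφ
  -- δ = k ∘ γ ∘ h is bijective
  have hδ : Function.Bijective ((k.comp γ).comp h) := by
    apply hEauto
    rw [LinearMap.comp_assoc, hh, LinearMap.comp_assoc, hγ, hk]
  -- φ'⁻¹ ∘ ψ = ψ
  have hφψ : ∀ m : ↥M, φ'.symm (ψ m) = ψ m := by
    intro m
    have h1 : φ (ψ m) = ψ m := by
      have := congrArg (fun (θ : (↥M) →ₗ[R] E) => θ m)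
        (by rw [LinearMap.comp_assoc, hh, hk] : φ.comp ψ = ψ)
      exact this
    conv_lhs => rw [← h1]
    exact φ'.symm_apply_apply (ψ m)
  -- e := h ∘ φ'⁻¹ ∘ k fixes M pointwise, is idempotent, hence identity
  let e : L →ₗ[R] L := (h.comp φ'.symm.toLinearMap).comp k
  have heM : e.comp M.subtype = M.subtype := by
    ext m
    show h (φ'.symm (k (m : L))) = (m : L)
    have h2 : k ((m : L)) = ψ m := congrArg (fun (θ : (↥M) →ₗ[R] E) => θ m) hk
    rw [h2, hφψ]
    exact congrArg (fun (θ : (↥M) →ₗ[R] L) => θ m) hh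
  have hkh : ∀ x : E, k (h x) = φ x := fun _ => rfl
  have heid : ∀ x : L, e (e x) = e x := by
    intro x
    show h (φ'.symm (k (h (φ'.symm (k x))))) = h (φ'.symm (k x))
    rw [hkh]
    congr 1
    exact φ'.symm_apply_apply (φ'.symm (k x))
  have he : ∀ x : L, e x = x := fun x => hmono e heM (heid x)
  -- h is surjective, k is injective
  have hhsurj : Function.Surjective h := fun x => ⟨φ'.symm (k x), he x⟩
  have hkinj : Function.Injective k := by
    intro a b hab
    have : e a = e b := by show h (φ'.symm (k a)) = h (φ'.symm (k b)); rw [hab]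
    rwa [he, he] at this
  have hksurj : Function.Surjective k := fun y => by
    obtain ⟨x, hx⟩ := hφ.2 y; exact ⟨h x, hx⟩
  have hhinj : Function.Injective h := fun a b hab => hφ.1 (by rw [← hkh, ← hkh, hab])
  refine ⟨hmono γ hγ, ?_⟩
  intro z
  obtain ⟨w, hw⟩ := hδ.2 (k z)
  refine ⟨h w, hkinj ?_⟩
  exact hw
end

section
/- Let 𝒳 be the class of pure projective left R-modules. Then the class of 𝒳-injective modules is closed under pure submodules: if A is a pure submodule of an 𝒳-injective module M, then A is 𝒳-injective. -/
open CategoryTheory Limits Opposite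

/-- `g : B → C` is a pure epimorphism: it is surjective and every map from a finitely
presented module into `C` lifts along `g`. -/
def IsPureEpi (R : Type) [Ring R] {B C : Type} [AddCommGroup B] [Module R B]
    [AddCommGroup C] [Module R C] (g : B →ₗ[R] C) : Prop :=
  Function.Surjective g ∧
    ∀ (F : Type) [AddCommGroup F] [Module R F], Module.FinitePresentation R F →
      ∀ f : F →ₗ[R] C, ∃ h : F →ₗ[R] B, g.comp h = f

/-- `X` is pure projective: projective with respect to all pure exact sequences. -/
def PureProjective (R : Type) [Ring R] (X : Type) [AddCommGroup X] [Module R X] : Prop :=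
  ∀ (B C : Type) [AddCommGroup B] [Module R B] [AddCommGroup C] [Module R C]
    (g : B →ₗ[R] C), IsPureEpi R g → ∀ f : X →ₗ[R] C, ∃ h : X →ₗ[R] B, g.comp h = f

/-- `M` is `𝒳`-injective for `𝒳` the class of pure projective modules. -/
def PPInjective (R : Type) [Ring R] (M : ModuleCat R) : Prop :=
  ∀ X : ModuleCat R, PureProjective R (↥X) → extZero R 1 X M

lemma key {R : Type} [Ring R] {M : Type} [AddCommGroup M] [Module R M] (A : Submodule R M)
    (hpure : IsPureEpi R A.mkQ)
    {X P0 P1 P2 : Type} [AddCommGroup X] [Module R X] [AddCommGroup P0] [Module R P0]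
    [AddCommGroup P1] [Module R P1] [AddCommGroup P2] [Module R P2]
    (hX : PureProjective R X)
    (d2 : P2 →ₗ[R] P1) (d1 : P1 →ₗ[R] P0) (ε : P0 →ₗ[R] X)
    (hεsurj : Function.Surjective ε)
    (hker : ∀ x, ε x = 0 → ∃ y, d1 y = x)
    (hd1ε : ε.comp d1 = 0)
    (hlift : ∀ u : P1 →ₗ[R] M, u.comp d2 = 0 → ∃ v : P0 →ₗ[R] M, v.comp d1 = u)
    (f : P1 →ₗ[R] ↥A) (hf : f.comp d2 = 0) :
    ∃ g : P0 →ₗ[R] ↥A, g.comp d1 = f := by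
  set ι := A.subtype
  obtain ⟨v, hv⟩ := hlift (ι.comp f) (by rw [LinearMap.comp_assoc, hf, LinearMap.comp_zero])
  set h0 : P0 →ₗ[R] M ⧸ A := A.mkQ.comp v with hh0
  have hle : LinearMap.ker ε ≤ LinearMap.ker h0 := by
    intro x hx
    obtain ⟨y, rfl⟩ := hker x hx
    have : v (d1 y) = ι (f y) := congrArg (fun t => t y) hv
    simp only [LinearMap.mem_ker, hh0, LinearMap.comp_apply, this,
      Submodule.mkQ_apply, Submodule.Quotient.mk_eq_zero]
    exact (f y).2
  set e := ε.quotKerEquivOfSurjective hεsurj with he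
  have hemk : ∀ x : P0, e (Submodule.Quotient.mk x) = ε x := fun x => rfl
  set h : X →ₗ[R] M ⧸ A :=
    (Submodule.liftQ (LinearMap.ker ε) h0 hle).comp (e.symm : X →ₗ[R] P0 ⧸ LinearMap.ker ε)
    with hh
  have hhε : ∀ x : P0, h (ε x) = h0 x := by
    intro x
    have : e.symm (ε x) = Submodule.Quotient.mk x := by
      apply e.injective; rw [e.apply_symm_apply, hemk]
    simp [hh, this]
  obtain ⟨k, hk⟩ := hX M (M ⧸ A) A.mkQ hpure h
  have hmem : ∀ x : P0, v x - k (ε x) ∈ A := by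
    intro x
    rw [← Submodule.Quotient.mk_eq_zero, ← Submodule.mkQ_apply, map_sub]
    have : A.mkQ (k (ε x)) = h (ε x) := congrArg (fun t => t (ε x)) hk
    rw [this, hhε]
    simp [hh0]
  refine ⟨(v - k.comp ε).codRestrict A hmem, ?_⟩
  ext y
  have h1 : v (d1 y) = ι (f y) := congrArg (fun t => t y) hv
  have h2 : ε (d1 y) = 0 := congrArg (fun t => t y) hd1ε
  simp [LinearMap.codRestrict, h1, h2, ι]

/-- For `𝒳` the class of pure projective modules, the class of `𝒳`-injective modules is
closed under pure submodules. -/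
theorem stmt15 (R : Type) [Ring R]
    (M : Type) [AddCommGroup M] [Module R M] (A : Submodule R M)
    (hM : PPInjective R (ModuleCat.of R M))
    (hpure : IsPureEpi R A.mkQ) :
    PPInjective R (ModuleCat.of R (↥A)) := by
  intro X hX
  obtain ⟨P⟩ := (HasProjectiveResolutions.out (C := ModuleCat R) X).out
  -- the augmentation map
  set ε : P.complex.X 0 ⟶ X :=
    P.π.f 0 ≫ (HomologicalComplex.singleObjXSelf (ComplexShape.down ℕ) 0 X).hom with hε
  have hεepi : Epi ε := epi_comp _ _
  have hεsurj : Function.Surjective ε := (ModuleCat.epi_iff_surjective ε).mp hεepi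
  have hd1ε : P.complex.d 1 0 ≫ ε = 0 := by
    rw [hε, ← Category.assoc, P.complex_d_comp_π_f_zero, zero_comp]
  have hEx : (ShortComplex.mk (P.complex.d 1 0) ε hd1ε).Exact := by
    refine (ShortComplex.exact_iff_of_iso ?_).mp P.exact₀
    exact ShortComplex.isoMk (Iso.refl _) (Iso.refl _)
      (HomologicalComplex.singleObjXSelf (ComplexShape.down ℕ) 0 X) (by simp) (by simp [hε])
  have hker := (ShortComplex.moduleCat_exact_iff _).mp hEx
  -- transfer the hypothesis on M
  have hMz := hM X hX
  rw [extZero] at hMz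
  have hMz' := hMz.of_iso (P.isoExt 1 (ModuleCat.of R M)).symm
  rw [← HomologicalComplex.exactAt_iff_isZero_homology,
    HomologicalComplex.exactAt_iff' _ 0 1 2 (by simp) (by simp),
    ShortComplex.moduleCat_exact_iff] at hMz'
  have hlift : ∀ u : P.complex.X 1 →ₗ[R] M, u.comp (P.complex.d 2 1).hom = 0 →
      ∃ v : P.complex.X 0 →ₗ[R] M, v.comp (P.complex.d 1 0).hom = u := by
    intro u hu
    obtain ⟨v, hv⟩ := hMz' (ModuleCat.ofHom u) (by
      change P.complex.d 2 1 ≫ ModuleCat.ofHom u = 0; exact ModuleCat.hom_ext hu)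
    exact ⟨v.hom, by
      exact congrArg ModuleCat.Hom.hom hv⟩
  -- the goal
  rw [extZero]
  refine IsZero.of_iso ?_ (P.isoExt 1 (ModuleCat.of R ↥A))
  rw [← HomologicalComplex.exactAt_iff_isZero_homology,
    HomologicalComplex.exactAt_iff' _ 0 1 2 (by simp) (by simp),
    ShortComplex.moduleCat_exact_iff]
  intro f hf
  obtain ⟨g, hg⟩ := key A hpure hX (P.complex.d 2 1).hom (P.complex.d 1 0).hom ε.hom hεsurj hker (congrArg ModuleCat.Hom.hom hd1ε) hlift f.hom (by
      exact congrArg ModuleCat.Hom.hom hf)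
  exact ⟨ModuleCat.ofHom g, by
    change P.complex.d 1 0 ≫ ModuleCat.ofHom g = f; exact ModuleCat.hom_ext hg⟩
end
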